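/- Let N ≥ 3 and let α ∈ ℝ satisfy α ∉ πℤ and Nα ∉ 2πℤ. Let L_{C,α} = 2cos(α)·I_N − A_C be the generalized simple-cycle Laplacian, viewed as an N×N complex matrix. Define M ∈ ℂ^{N×N} by M_{mn} = e^{iα|n−m|} / ((e^{iα} − e^{−iα})(e^{iαN} − 1)) + e^{−iα|n−m|} / ((e^{−iα} − e^{iα})(e^{−iαN} − 1)) for 0 ≤ m,n ≤ N−1 (with |n−m| the ordinary absolute value of integers). Then L_{C,α}·M = I_N, i.e. M is the inverse of L_{C,α}. -/

import Mathlib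

open Matrix

set_option maxHeartbeats 2000000 in
/-- For `α ∉ πℤ` with `Nα ∉ 2πℤ`, the inverse of the generalized simple-cycle Laplacian
`L_{C,α} = 2cos(α)·I - A_C` (over `ℂ`) is the matrix with entries
`e^{iα|n-m|}/((e^{iα}-e^{-iα})(e^{iαN}-1)) + e^{-iα|n-m|}/((e^{-iα}-e^{iα})(e^{-iαN}-1))`. -/
theorem generalized_cycle_laplacian_inverse_formula
    (N : ℕ) (hN : 3 ≤ N) (α : ℝ)
    (hα1 : ∀ m : ℤ, α ≠ m * Real.pi)
    (hα2 : ∀ m : ℤ, (N : ℝ) * α ≠ m * (2 * Real.pi))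
    (A L M : Matrix (Fin N) (Fin N) ℂ)
    (hA : ∀ i j, A i j =
      if j.val = (i.val + 1) % N ∨ i.val = (j.val + 1) % N then 1 else 0)
    (hL : L = ((2 * Real.cos α : ℝ) : ℂ) • (1 : Matrix (Fin N) (Fin N) ℂ) - A)
    (hM : ∀ m n, M m n =
      Complex.exp (Complex.I * (α : ℂ) * ((|(n.val : ℝ) - (m.val : ℝ)| : ℝ) : ℂ)) /
        ((Complex.exp (Complex.I * (α : ℂ)) - Complex.exp (-(Complex.I * (α : ℂ)))) *
          (Complex.exp (Complex.I * (α : ℂ) * (N : ℂ)) - 1)) +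
      Complex.exp (-(Complex.I * (α : ℂ) * ((|(n.val : ℝ) - (m.val : ℝ)| : ℝ) : ℂ))) /
        ((Complex.exp (-(Complex.I * (α : ℂ))) - Complex.exp (Complex.I * (α : ℂ))) *
          (Complex.exp (-(Complex.I * (α : ℂ) * (N : ℂ))) - 1))) :
    L * M = 1 := by
  haveI : NeZero N := ⟨by omega⟩
  set q : ℂ := Complex.exp (Complex.I * (α:ℂ)) with hqdef
  have hq0 : q ≠ 0 := Complex.exp_ne_zero _
  have hpow : ∀ d : ℕ, Complex.exp (Complex.I * (α:ℂ) * (d:ℂ)) = q ^ d := by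
    intro d
    rw [hqdef, ← Complex.exp_nat_mul]
    ring_nf
  have hinv : Complex.exp (-(Complex.I * (α:ℂ))) = q⁻¹ := by
    rw [Complex.exp_neg]
  have hNpow : Complex.exp (Complex.I * (α:ℂ) * (N:ℂ)) = q ^ N := hpow N
  have hNinv : Complex.exp (-(Complex.I * (α:ℂ) * (N:ℂ))) = (q ^ N)⁻¹ := by
    rw [Complex.exp_neg, hNpow]
  have hqsq : q * q ≠ 1 := by
    rw [hqdef, ← Complex.exp_add]
    intro h
    obtain ⟨n, hn⟩ := Complex.exp_eq_one_iff.mp h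
    have him := congrArg Complex.im hn
    simp [Complex.mul_im, Complex.I_re, Complex.I_im] at him
    exact hα1 n (by nlinarith [Real.pi_pos, him])
  have hq2' : q - q⁻¹ ≠ 0 := by
    intro h
    apply hqsq
    have h1 : q = q⁻¹ := sub_eq_zero.mp h
    calc q * q = q * q⁻¹ := by rw [← h1]
    _ = 1 := mul_inv_cancel₀ hq0
  have hqN : q ^ N - 1 ≠ 0 := by
    intro h
    have h1 : q ^ N = 1 := by rwa [sub_eq_zero] at h
    rw [hqdef, ← Complex.exp_nat_mul] at h1
    obtain ⟨n, hn⟩ := Complex.exp_eq_one_iff.mp h1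
    have him := congrArg Complex.im hn
    simp [Complex.mul_im, Complex.I_re, Complex.I_im] at him
    exact hα2 n (by nlinarith [Real.pi_pos, him])
  have hcos : ((2 * Real.cos α : ℝ) : ℂ) = q + q⁻¹ := by
    push_cast
    rw [Complex.two_cos, show -(α:ℂ) * Complex.I = -(Complex.I * (α:ℂ)) by ring,
      show (α:ℂ) * Complex.I = Complex.I * (α:ℂ) by ring, hinv, ← hqdef]
  have hinvN : (q^N)⁻¹ - 1 ≠ 0 := by
    intro h
    apply hqN
    have h1 : (q^N)⁻¹ = 1 := by rwa [sub_eq_zero] at h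
    rw [sub_eq_zero, ← inv_eq_one]
    exact h1
  have hinvq : q⁻¹ - q ≠ 0 := by
    intro h
    apply hq2'
    have := sub_eq_zero.mp h
    rw [sub_eq_zero, this]
  have hMA : ∀ m n : Fin N, M m n =
      q ^ (((n.val:ℤ) - (m.val:ℤ)).natAbs) * ((q - q⁻¹) * (q ^ N - 1))⁻¹ +
      (q ^ (((n.val:ℤ) - (m.val:ℤ)).natAbs))⁻¹ * (q ^ N * ((q - q⁻¹) * (q ^ N - 1))⁻¹) := by
    intro m n
    rw [hM]
    have habs : ((|(n.val : ℝ) - (m.val : ℝ)| : ℝ) : ℂ)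
        = ((((n.val:ℤ) - (m.val:ℤ)).natAbs : ℕ) : ℂ) := by
      have : (|(n.val : ℝ) - (m.val : ℝ)| : ℝ)
          = ((((n.val:ℤ) - (m.val:ℤ)).natAbs : ℕ) : ℝ) := by
        rw [Nat.cast_natAbs]
        push_cast
        ring_nf
      rw [this]
      push_cast
      ring
    rw [habs]
    simp only [Complex.exp_neg, hpow, hNpow, ← hqdef]
    have hd0 : q ^ (((n.val:ℤ) - (m.val:ℤ)).natAbs) ≠ 0 := pow_ne_zero _ hq0
    have hqN0 : q ^ N ≠ 0 := pow_ne_zero _ hq0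
    field_simp
    have h2 : q ^ 2 - 1 ≠ 0 := by intro h; apply hqsq; linear_combination h
    have h3 : 1 - q ^ 2 ≠ 0 := by intro h; apply hqsq; linear_combination -h
    have h4 : 1 - q ^ N ≠ 0 := by intro h; apply hqN; linear_combination -h
    field_simp
    ring
  clear_value q
  clear hqdef hpow hinv hNpow hNinv hM hα1 hα2 hqsq hinvN hinvq
  subst hL
  rw [sub_mul, Matrix.smul_mul, Matrix.one_mul]
  ext i j
  rw [Matrix.sub_apply, Matrix.smul_apply, smul_eq_mul, hcos, Matrix.mul_apply,
    Matrix.one_apply]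
  have h1N : 1 % N = 1 := Nat.mod_eq_of_lt (by omega)
  have e1 : ∀ k : Fin N, ((k + 1 : Fin N)).val = (k.val + 1) % N := by
    intro k
    rw [Fin.add_def]
    simp [Fin.val_one', h1N]
  have e2 : ((i - 1 : Fin N)).val = (N - 1 + i.val) % N := by
    rw [Fin.sub_def]
    simp [Fin.val_one', h1N]
  have key : ∀ k : Fin N, (k.val = (i.val + 1) % N ∨ i.val = (k.val + 1) % N)
      ↔ (k = i + 1 ∨ k = i - 1) := by
    intro k
    constructor
    · rintro (h | h)
      · exact Or.inl (Fin.ext (h.trans (e1 i).symm))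
      · refine Or.inr ?_
        have h2 : i = k + 1 := Fin.ext (h.trans (e1 k).symm)
        rw [h2, add_sub_cancel_right]
    · rintro (h | h)
      · exact Or.inl (by rw [h, e1])
      · refine Or.inr ?_
        subst h
        rw [← e1, sub_add_cancel]
  have hne : (i + 1 : Fin N) ≠ i - 1 := by
    intro h
    have h2 : (1 : Fin N) = -1 := by
      rw [sub_eq_add_neg] at h
      exact add_left_cancel h
    have h4 : ((1 : Fin N) + 1) = (0 : Fin N) := eq_neg_iff_add_eq_zero.mp h2
    have h5 := congrArg Fin.val h4
    rw [e1, Fin.val_one', h1N, Fin.val_zero, Nat.mod_eq_of_lt (by omega)] at h5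
    omega
  have hsum : (∑ k, A i k * M k j) = M (i+1) j + M (i-1) j := by
    calc (∑ k, A i k * M k j)
        = ∑ k, (if k ∈ ({i+1, i-1} : Finset (Fin N)) then M k j else 0) := by
          refine Finset.sum_congr rfl fun k _ => ?_
          rw [hA]
          by_cases hk : k = i + 1 ∨ k = i - 1
          · rw [if_pos ((key k).mpr hk), if_pos (by simpa using hk), one_mul]
          · rw [if_neg (fun hc => hk ((key k).mp hc)), if_neg (by simpa using hk), zero_mul]
      _ = ∑ k ∈ Finset.univ ∩ {i+1, i-1}, M k j := Finset.sum_ite_mem _ _ _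
      _ = M (i+1) j + M (i-1) j := by rw [Finset.univ_inter, Finset.sum_pair hne]
  rw [hsum, hMA, hMA, hMA]
  have hiN : i.val < N := i.isLt
  have hjN : j.val < N := j.isLt
  by_cases ha0 : i.val = 0
  · have v1 : (i + 1 : Fin N).val = 1 := by
      rw [e1, ha0, Nat.mod_eq_of_lt (by omega)]
    have v2 : (i - 1 : Fin N).val = N - 1 := by
      rw [e2, ha0, Nat.mod_eq_of_lt (by omega)]
      omega
    by_cases hb0 : j.val = 0
    · rw [if_pos (show i = j from Fin.ext (by omega))]
      rw [show (((j.val:ℤ) - (i.val:ℤ)).natAbs) = 0 by omega,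
        show (((j.val:ℤ) - ((i+1:Fin N).val:ℤ)).natAbs) = 1 by omega,
        show (((j.val:ℤ) - ((i-1:Fin N).val:ℤ)).natAbs) = N - 1 by omega]
      obtain ⟨m, hm⟩ : ∃ m, N = m + 1 := ⟨N - 1, by omega⟩
      have hp1 : q ^ N = q ^ m * q := by rw [hm]; ring
      have hD : q ^ m * q - 1 ≠ 0 := by rw [← hp1]; exact hqN
      have hu : q ^ m ≠ 0 := pow_ne_zero _ hq0
      rw [show N - 1 = m by omega, hp1]
      have hD' : (q - q⁻¹) * (q ^ m * q - 1) ≠ 0 := mul_ne_zero hq2' hD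
      conv_rhs => rw [← mul_inv_cancel₀ hD']
      generalize ((q - q⁻¹) * (q ^ m * q - 1))⁻¹ = w
      linear_combination (q ^ m * w) * (mul_inv_cancel₀ hq0) - (q * w) * (mul_inv_cancel₀ hu)
    · rw [if_neg (show ¬ i = j from fun hh => by
        have := congrArg Fin.val hh; omega)]
      obtain ⟨c, hc⟩ : ∃ c, j.val = c + 1 := ⟨j.val - 1, by omega⟩
      obtain ⟨e, he⟩ : ∃ e, N = c + e + 2 := ⟨N - j.val - 1, by omega⟩
      rw [show (((j.val:ℤ) - (i.val:ℤ)).natAbs) = c + 1 by omega,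
        show (((j.val:ℤ) - ((i+1:Fin N).val:ℤ)).natAbs) = c by omega,
        show (((j.val:ℤ) - ((i-1:Fin N).val:ℤ)).natAbs) = e by omega]
      have hp1 : q ^ N = q ^ c * q ^ e * q ^ 2 := by rw [he]; ring
      rw [hp1]
      generalize ((q - q⁻¹) * (q ^ c * q ^ e * q ^ 2 - 1))⁻¹ = w
      field_simp
      ring
  · by_cases haN : i.val = N - 1
    · have v1 : (i + 1 : Fin N).val = 0 := by
        rw [e1, haN, show N - 1 + 1 = N by omega, Nat.mod_self]
      have v2 : (i - 1 : Fin N).val = N - 2 := by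
        rw [e2, haN, show N - 1 + (N - 1) = (N - 2) + 1 * N by omega,
          Nat.add_mul_mod_self_right, Nat.mod_eq_of_lt (by omega)]
      by_cases hbN : j.val = N - 1
      · rw [if_pos (show i = j from Fin.ext (by omega))]
        rw [show (((j.val:ℤ) - (i.val:ℤ)).natAbs) = 0 by omega,
          show (((j.val:ℤ) - ((i+1:Fin N).val:ℤ)).natAbs) = N - 1 by omega,
          show (((j.val:ℤ) - ((i-1:Fin N).val:ℤ)).natAbs) = 1 by omega]
        obtain ⟨m, hm⟩ : ∃ m, N = m + 1 := ⟨N - 1, by omega⟩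
        have hp1 : q ^ N = q ^ m * q := by rw [hm]; ring
        have hD : q ^ m * q - 1 ≠ 0 := by rw [← hp1]; exact hqN
        have hu : q ^ m ≠ 0 := pow_ne_zero _ hq0
        rw [show N - 1 = m by omega, hp1]
        have hD' : (q - q⁻¹) * (q ^ m * q - 1) ≠ 0 := mul_ne_zero hq2' hD
        conv_rhs => rw [← mul_inv_cancel₀ hD']
        generalize ((q - q⁻¹) * (q ^ m * q - 1))⁻¹ = w
        linear_combination (q ^ m * w) * (mul_inv_cancel₀ hq0) - (q * w) * (mul_inv_cancel₀ hu)
      · rw [if_neg (show ¬ i = j from fun hh => by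
          have := congrArg Fin.val hh; omega)]
        obtain ⟨e, he⟩ : ∃ e, N = j.val + e + 2 := ⟨N - j.val - 2, by omega⟩
        rw [show (((j.val:ℤ) - (i.val:ℤ)).natAbs) = e + 1 by omega,
          show (((j.val:ℤ) - ((i+1:Fin N).val:ℤ)).natAbs) = j.val by omega,
          show (((j.val:ℤ) - ((i-1:Fin N).val:ℤ)).natAbs) = e by omega]
        have hp1 : q ^ N = q ^ j.val * q ^ e * q ^ 2 := by
          conv_lhs => rw [he]
          ring
        rw [hp1]
        generalize ((q - q⁻¹) * (q ^ j.val * q ^ e * q ^ 2 - 1))⁻¹ = w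
        field_simp
        ring
    · -- interior
      have v1 : (i + 1 : Fin N).val = i.val + 1 := by
        rw [e1, Nat.mod_eq_of_lt (by omega)]
      have v2 : (i - 1 : Fin N).val = i.val - 1 := by
        rw [e2, show N - 1 + i.val = (i.val - 1) + 1 * N by omega,
          Nat.add_mul_mod_self_right, Nat.mod_eq_of_lt (by omega)]
      rcases Nat.lt_trichotomy j.val i.val with hlt | heq | hgt
      · rw [if_neg (show ¬ i = j from fun hh => by
          have := congrArg Fin.val hh; omega)]
        obtain ⟨d, hd⟩ : ∃ d, i.val = j.val + d + 1 := ⟨i.val - j.val - 1, by omega⟩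
        rw [show (((j.val:ℤ) - (i.val:ℤ)).natAbs) = d + 1 by omega,
          show (((j.val:ℤ) - ((i+1:Fin N).val:ℤ)).natAbs) = d + 2 by omega,
          show (((j.val:ℤ) - ((i-1:Fin N).val:ℤ)).natAbs) = d by omega]
        generalize ((q - q⁻¹) * (q ^ N - 1))⁻¹ = w
        field_simp
        ring
      · rw [if_pos (show i = j from Fin.ext (by omega))]
        rw [show (((j.val:ℤ) - (i.val:ℤ)).natAbs) = 0 by omega,
          show (((j.val:ℤ) - ((i+1:Fin N).val:ℤ)).natAbs) = 1 by omega,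
          show (((j.val:ℤ) - ((i-1:Fin N).val:ℤ)).natAbs) = 1 by omega]
        have hD' : (q - q⁻¹) * (q ^ N - 1) ≠ 0 := mul_ne_zero hq2' hqN
        conv_rhs => rw [← mul_inv_cancel₀ hD']
        generalize ((q - q⁻¹) * (q ^ N - 1))⁻¹ = w
        linear_combination (0 : ℂ) * (mul_inv_cancel₀ hq0)
      · rw [if_neg (show ¬ i = j from fun hh => by
          have := congrArg Fin.val hh; omega)]
        obtain ⟨d, hd⟩ : ∃ d, j.val = i.val + d + 1 := ⟨j.val - i.val - 1, by omega⟩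
        rw [show (((j.val:ℤ) - (i.val:ℤ)).natAbs) = d + 1 by omega,
          show (((j.val:ℤ) - ((i+1:Fin N).val:ℤ)).natAbs) = d by omega,
          show (((j.val:ℤ) - ((i-1:Fin N).val:ℤ)).natAbs) = d + 2 by omega]
        generalize ((q - q⁻¹) * (q ^ N - 1))⁻¹ = w
        field_simp
        ring
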